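/- If (G,f) is a P-filtered graph and e is a collapsible edge, then for i ∈ {0,1} the persistence modules H_i(G,f) and H_i(G↓e, f) are isomorphic, where G↓e is the simple collapse of G along e. -/

import Mathlib

structure Grph where
  V : Type
  E : Type
  [fintV : Fintype V]
  [fintE : Fintype E]
  [decV : DecidableEq V]
  [decE : DecidableEq E]
  bnd : E → V × V

attribute [instance] Grph.fintV Grph.fintE Grph.decV Grph.decE

/-- boundary map k⟨E⟩ → k⟨V⟩, e ↦ e₁ - e₀ -/
noncomputable def Grph.d (G : Grph) (k : Type) [Field k] :
    (G.E →₀ k) →ₗ[k] (G.V →₀ k) :=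
  Finsupp.linearCombination k fun e =>
    Finsupp.single (G.bnd e).2 1 - Finsupp.single (G.bnd e).1 1

def Grph.adj (G : Grph) (v w : G.V) : Prop :=
  ∃ e, G.bnd e = (v, w) ∨ G.bnd e = (w, v)

structure FGrph (P : Type) [PartialOrder P] extends Grph where
  fV : V → P
  fE : E → P
  mono0 : ∀ e, fV (bnd e).1 ≤ fE e
  mono1 : ∀ e, fV (bnd e).2 ≤ fE e

variable {P : Type} [PartialOrder P]

/-- boundary map of the sublevel graph at grade r -/
noncomputable def FGrph.dr (G : FGrph P) (k : Type) [Field k] (r : P) :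
    ({e : G.E // G.fE e ≤ r} →₀ k) →ₗ[k] ({v : G.V // G.fV v ≤ r} →₀ k) :=
  Finsupp.linearCombination k fun e =>
    Finsupp.single ⟨(G.bnd e.1).2, le_trans (G.mono1 e.1) e.2⟩ 1 -
    Finsupp.single ⟨(G.bnd e.1).1, le_trans (G.mono0 e.1) e.2⟩ 1

noncomputable def FGrph.vmap (G : FGrph P) (k : Type) [Field k] {r s : P} (h : r ≤ s) :
    ({v : G.V // G.fV v ≤ r} →₀ k) →ₗ[k] ({v : G.V // G.fV v ≤ s} →₀ k) :=
  Finsupp.lmapDomain k k fun v => ⟨v.1, le_trans v.2 h⟩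

noncomputable def FGrph.emap (G : FGrph P) (k : Type) [Field k] {r s : P} (h : r ≤ s) :
    ({e : G.E // G.fE e ≤ r} →₀ k) →ₗ[k] ({e : G.E // G.fE e ≤ s} →₀ k) :=
  Finsupp.lmapDomain k k fun e => ⟨e.1, le_trans e.2 h⟩

lemma FGrph.dNat (G : FGrph P) (k : Type) [Field k] {r s : P} (h : r ≤ s) :
    (G.dr k s).comp (G.emap k h) = (G.vmap k h).comp (G.dr k r) := by
  apply Finsupp.lhom_ext
  intro e a
  show (G.dr k s) ((G.emap k h) (Finsupp.single e a)) =
    (G.vmap k h) ((G.dr k r) (Finsupp.single e a))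
  rw [FGrph.emap, Finsupp.lmapDomain_apply, Finsupp.mapDomain_single, FGrph.dr,
    Finsupp.linearCombination_single, FGrph.dr, Finsupp.linearCombination_single,
    map_smul, map_sub, FGrph.vmap, Finsupp.lmapDomain_apply, Finsupp.lmapDomain_apply,
    Finsupp.mapDomain_single, Finsupp.mapDomain_single]

/-- 0-dim homology of the sublevel graph at r -/
noncomputable abbrev FGrph.H0at (G : FGrph P) (k : Type) [Field k] (r : P) :=
  ({v : G.V // G.fV v ≤ r} →₀ k) ⧸ LinearMap.range (G.dr k r)

noncomputable def FGrph.H0map (G : FGrph P) (k : Type) [Field k] {r s : P} (h : r ≤ s) :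
    G.H0at k r →ₗ[k] G.H0at k s :=
  Submodule.mapQ _ _ (G.vmap k h) (by
    rintro x ⟨y, rfl⟩
    exact ⟨G.emap k h y, by
      have := LinearMap.congr_fun (G.dNat k h) y
      simpa using this⟩)

noncomputable abbrev FGrph.H1at (G : FGrph P) (k : Type) [Field k] (r : P) :=
  LinearMap.ker (G.dr k r)

noncomputable def FGrph.H1map (G : FGrph P) (k : Type) [Field k] {r s : P} (h : r ≤ s) :
    G.H1at k r →ₗ[k] G.H1at k s :=
  (G.emap k h).restrict (p := LinearMap.ker (G.dr k r)) (q := LinearMap.ker (G.dr k s))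
    (by
      intro x hx
      have := LinearMap.congr_fun (G.dNat k h) x
      simp only [LinearMap.mem_ker] at hx ⊢
      simp only [LinearMap.coe_comp, Function.comp_apply] at this
      rw [this, hx, map_zero])

def FGrph.adjAt (G : FGrph P) (r : P) (a b : G.V) : Prop :=
  ∃ e, G.fE e ≤ r ∧ (G.bnd e = (a, b) ∨ G.bnd e = (b, a))

def FGrph.connAt (G : FGrph P) (r : P) : G.V → G.V → Prop :=
  Relation.ReflTransGen (G.adjAt r)

def FGrph.pi0At (G : FGrph P) (r : P) :=
  Quot (fun a b : {v : G.V // G.fV v ≤ r} => G.adjAt r a.1 b.1)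

def FGrph.Collapsible (G : FGrph P) (e : G.E) : Prop :=
  (G.bnd e).1 ≠ (G.bnd e).2 ∧
    (G.fE e = G.fV (G.bnd e).1 ∨ G.fE e = G.fV (G.bnd e).2)

def FGrph.delete (G : FGrph P) (e : G.E) : FGrph P where
  V := G.V
  E := {d : G.E // d ≠ e}
  bnd d := G.bnd d.1
  fV := G.fV
  fE d := G.fE d.1
  mono0 d := G.mono0 d.1
  mono1 d := G.mono1 d.1

def FGrph.Deletable (G : FGrph P) (e : G.E) : Prop :=
  (G.delete e).connAt (G.fE e) (G.bnd e).1 (G.bnd e).2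

def FGrph.collapse (G : FGrph P) (e : G.E) (x y : G.V) (hxy : y ≠ x)
    (hf : G.fV y ≤ G.fV x) : FGrph P where
  V := {v : G.V // v ≠ x}
  E := {d : G.E // d ≠ e}
  bnd d :=
    (if h : (G.bnd d.1).1 = x then ⟨y, hxy⟩ else ⟨(G.bnd d.1).1, h⟩,
     if h : (G.bnd d.1).2 = x then ⟨y, hxy⟩ else ⟨(G.bnd d.1).2, h⟩)
  fV v := G.fV v.1
  fE d := G.fE d.1
  mono0 d := by
    dsimp only
    split
    · exact le_trans hf (by rw [← ‹(G.bnd d.1).1 = x›]; exact G.mono0 d.1)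
    · exact G.mono0 d.1
  mono1 d := by
    dsimp only
    split
    · exact le_trans hf (by rw [← ‹(G.bnd d.1).2 = x›]; exact G.mono1 d.1)
    · exact G.mono1 d.1


section CollapseAux

variable (k : Type) [Field k] (G : FGrph P) (e : G.E) (x y : G.V) (hne : y ≠ x)
  (hfe : G.fE e = G.fV x) (hf : G.fV y ≤ G.fV x)

/-- sign of the orientation of `e` -/
noncomputable def csgn : k := if G.bnd e = (x, y) then 1 else -1

lemma csgn_mul_self : csgn k G e x y * csgn k G e x y = 1 := by
  unfold csgn; split <;> ring

/-- chain map on vertices: collapse `x` to `y` -/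
noncomputable def phiV (r : P) :
    ({v : G.V // G.fV v ≤ r} →₀ k) →ₗ[k]
      ({v : (G.collapse e x y hne hf).V // (G.collapse e x y hne hf).fV v ≤ r} →₀ k) :=
  Finsupp.lmapDomain k k fun v =>
    if h : v.1 = x then ⟨⟨y, hne⟩, le_trans hf (by rw [← h]; exact v.2)⟩
    else ⟨⟨v.1, h⟩, v.2⟩

/-- chain map on vertices: inclusion -/
noncomputable def psiV (r : P) :
    ({v : (G.collapse e x y hne hf).V // (G.collapse e x y hne hf).fV v ≤ r} →₀ k) →ₗ[k]
      ({v : G.V // G.fV v ≤ r} →₀ k) :=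
  Finsupp.lmapDomain k k fun v => (⟨v.1.1, v.2⟩ : {v : G.V // G.fV v ≤ r})

/-- chain map on edges: kill `e` -/
noncomputable def phiE (r : P) :
    ({d : G.E // G.fE d ≤ r} →₀ k) →ₗ[k]
      ({d : (G.collapse e x y hne hf).E // (G.collapse e x y hne hf).fE d ≤ r} →₀ k) :=
  Finsupp.linearCombination k fun d =>
    if h : d.1 = e then 0 else Finsupp.single ⟨⟨d.1, h⟩, d.2⟩ 1

/-- chain map on edges: inclusion corrected by multiples of `e` -/
noncomputable def psiE (r : P) :
    ({d : (G.collapse e x y hne hf).E // (G.collapse e x y hne hf).fE d ≤ r} →₀ k) →ₗ[k]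
      ({d : G.E // G.fE d ≤ r} →₀ k) :=
  Finsupp.linearCombination k fun d =>
    Finsupp.single ⟨d.1.1, d.2⟩ 1
    + (if h : (G.bnd d.1.1).2 = x then
        csgn k G e x y •
          Finsupp.single ⟨e, by rw [hfe, ← h]; exact le_trans (G.mono1 d.1.1) d.2⟩ 1
      else 0)
    - (if h : (G.bnd d.1.1).1 = x then
        csgn k G e x y •
          Finsupp.single ⟨e, by rw [hfe, ← h]; exact le_trans (G.mono0 d.1.1) d.2⟩ 1
      else 0)

/-- chain homotopy -/
noncomputable def hmt (r : P) :
    ({v : G.V // G.fV v ≤ r} →₀ k) →ₗ[k] ({d : G.E // G.fE d ≤ r} →₀ k) :=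
  Finsupp.linearCombination k fun v =>
    if h : v.1 = x then
      (-(csgn k G e x y)) • Finsupp.single ⟨e, by rw [hfe, ← h]; exact v.2⟩ 1
    else 0

omit hne in
lemma dr_single {G : FGrph P} {r : P} (d : {d : G.E // G.fE d ≤ r}) (a : k) :
    G.dr k r (Finsupp.single d a) =
      a • (Finsupp.single ⟨(G.bnd d.1).2, le_trans (G.mono1 d.1) d.2⟩ 1 -
        Finsupp.single ⟨(G.bnd d.1).1, le_trans (G.mono0 d.1) d.2⟩ 1) := by
  rw [FGrph.dr, Finsupp.linearCombination_single]

include hne in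
lemma dr_single_e (hbnd : G.bnd e = (x, y) ∨ G.bnd e = (y, x)) (r : P) (he : G.fE e ≤ r) (hx : G.fV x ≤ r) (hy : G.fV y ≤ r) :
    G.dr k r (Finsupp.single ⟨e, he⟩ 1) =
      csgn k G e x y • (Finsupp.single ⟨y, hy⟩ 1 - Finsupp.single ⟨x, hx⟩ 1) := by
  rw [FGrph.dr, Finsupp.linearCombination_single, one_smul, csgn]
  rcases hbnd with h | h
  · rw [if_pos h]; simp [h]
  · have hne' : G.bnd e ≠ (x, y) := by
      rw [h]; intro hc; exact hne (congrArg Prod.fst hc)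
    rw [if_neg hne']
    simp [h, neg_smul, one_smul, neg_sub]

lemma chain_phi (hbnd : G.bnd e = (x, y) ∨ G.bnd e = (y, x)) (r : P) :
    ((G.collapse e x y hne hf).dr k r).comp (phiE k G e x y hne hf r) =
      (phiV k G e x y hne hf r).comp (G.dr k r) := by
  apply Finsupp.lhom_ext
  intro d a
  simp only [LinearMap.coe_comp, Function.comp_apply]
  rw [phiE, Finsupp.linearCombination_single]
  by_cases hd : d.1 = e
  · rw [dif_pos hd, smul_zero, map_zero, FGrph.dr, Finsupp.linearCombination_single,
      map_smul, map_sub, phiV, Finsupp.lmapDomain_apply, Finsupp.lmapDomain_apply,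
      Finsupp.mapDomain_single, Finsupp.mapDomain_single]
    rcases hbnd with h | h
    · simp [hd, h, hne]
    · simp [hd, h, hne]
  · rw [dif_neg hd, map_smul, FGrph.dr, Finsupp.linearCombination_single, one_smul,
      FGrph.dr, Finsupp.linearCombination_single, map_smul, map_sub, phiV,
      Finsupp.lmapDomain_apply, Finsupp.lmapDomain_apply,
      Finsupp.mapDomain_single, Finsupp.mapDomain_single]
    simp only [FGrph.collapse]
    by_cases h1 : (G.bnd d.1).1 = x <;> by_cases h2 : (G.bnd d.1).2 = x <;>
      simp [h1, h2]

lemma chain_psi (hbnd : G.bnd e = (x, y) ∨ G.bnd e = (y, x)) (r : P) :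
    (G.dr k r).comp (psiE k G e x y hne hfe hf r) =
      (psiV k G e x y hne hf r).comp ((G.collapse e x y hne hf).dr k r) := by
  apply Finsupp.lhom_ext
  intro d a
  simp only [LinearMap.coe_comp, Function.comp_apply]
  rw [psiE, Finsupp.linearCombination_single, map_smul]
  conv_rhs => rw [dr_single k d a, map_smul]
  congr 1
  rw [map_sub, map_add, dr_single]
  simp only [psiV, map_sub, Finsupp.lmapDomain_apply, Finsupp.mapDomain_single]
  simp only [psiV, Finsupp.lmapDomain_apply, Finsupp.mapDomain_single, FGrph.collapse,
    map_sub, one_smul]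
  rcases hbnd with hb | hb <;>
  by_cases h1 : (G.bnd d.1.1).1 = x <;> by_cases h2 : (G.bnd d.1.1).2 = x <;>
    simp [h1, h2, hb, hne, csgn, dr_single, Prod.mk.injEq, smul_sub, smul_smul]

lemma phi_psi_E (r : P) :
    (phiE k G e x y hne hf r).comp (psiE k G e x y hne hfe hf r) = LinearMap.id := by
  apply Finsupp.lhom_ext
  intro d a
  simp only [LinearMap.coe_comp, Function.comp_apply, LinearMap.id_coe, id_eq]
  rw [psiE, Finsupp.linearCombination_single, map_smul, map_sub, map_add]
  simp only [phiE, Finsupp.linearCombination_single, d.1.2, dif_neg, dif_pos,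
    not_false_eq_true]
  by_cases h1 : (G.bnd d.1.1).1 = x <;> by_cases h2 : (G.bnd d.1.1).2 = x <;>
    simp [h1, h2, Finsupp.smul_single] <;> rfl

lemma phi_psi_V (r : P) :
    (phiV k G e x y hne hf r).comp (psiV k G e x y hne hf r) = LinearMap.id := by
  apply Finsupp.lhom_ext
  intro v a
  simp only [LinearMap.coe_comp, Function.comp_apply, LinearMap.id_coe, id_eq,
    psiV, phiV, Finsupp.lmapDomain_apply, Finsupp.mapDomain_single]
  rw [dif_neg v.1.2]
  rfl

lemma homotopy_V (hbnd : G.bnd e = (x, y) ∨ G.bnd e = (y, x)) (r : P) :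
    LinearMap.id - (psiV k G e x y hne hf r).comp (phiV k G e x y hne hf r) =
      (G.dr k r).comp (hmt k G e x y hfe r) := by
  apply Finsupp.lhom_ext
  intro v a
  simp only [LinearMap.sub_apply, LinearMap.coe_comp, Function.comp_apply,
    LinearMap.id_apply]
  obtain ⟨v, hv⟩ := v
  by_cases hvx : v = x
  · subst hvx
    rw [hmt, Finsupp.linearCombination_single, dif_pos rfl]
    simp only [phiV, psiV, Finsupp.lmapDomain_apply, Finsupp.mapDomain_single,
      dif_pos rfl, map_smul, dr_single]
    rcases hbnd with hb | hb <;>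
      simp [csgn, hb, hne, Prod.mk.injEq, smul_sub, smul_smul, Finsupp.smul_single] <;> abel
  · rw [hmt, Finsupp.linearCombination_single, dif_neg hvx]
    simp only [phiV, psiV, Finsupp.lmapDomain_apply, Finsupp.mapDomain_single,
      dif_neg hvx, smul_zero, map_zero, sub_self]

lemma homotopy_E (hbnd : G.bnd e = (x, y) ∨ G.bnd e = (y, x)) (r : P) :
    LinearMap.id - (psiE k G e x y hne hfe hf r).comp (phiE k G e x y hne hf r) =
      (hmt k G e x y hfe r).comp (G.dr k r) := by
  apply Finsupp.lhom_ext
  intro d a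
  simp only [LinearMap.sub_apply, LinearMap.coe_comp, Function.comp_apply,
    LinearMap.id_apply]
  rw [dr_single, map_smul, map_sub, phiE, Finsupp.linearCombination_single, map_smul]
  obtain ⟨d, hd⟩ := d
  by_cases hde : d = e
  · subst hde
    rw [dif_pos rfl, map_zero, smul_zero, sub_zero]
    rcases hbnd with hb | hb <;>
      simp [hmt, Finsupp.linearCombination_single, hb, hne, csgn, Prod.mk.injEq,
        smul_sub, smul_smul, Finsupp.smul_single]
  · rw [dif_neg hde]
    rw [psiE, Finsupp.linearCombination_single, one_smul]
    simp only [hmt, Finsupp.linearCombination_single]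
    by_cases h1 : (G.bnd d).1 = x <;> by_cases h2 : (G.bnd d).2 = x <;>
      simp [h1, h2, smul_sub, smul_smul, Finsupp.smul_single] <;> abel

lemma nat_phiV {r s : P} (h : r ≤ s) :
    (phiV k G e x y hne hf s).comp (G.vmap k h) =
      ((G.collapse e x y hne hf).vmap k h).comp (phiV k G e x y hne hf r) := by
  apply Finsupp.lhom_ext
  intro v a
  simp only [LinearMap.coe_comp, Function.comp_apply, phiV, FGrph.vmap,
    Finsupp.lmapDomain_apply, Finsupp.mapDomain_single]
  by_cases hv : v.1 = x
  · rw [dif_pos hv, dif_pos hv]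
  · rw [dif_neg hv, dif_neg hv]

lemma nat_phiE {r s : P} (h : r ≤ s) :
    (phiE k G e x y hne hf s).comp (G.emap k h) =
      ((G.collapse e x y hne hf).emap k h).comp (phiE k G e x y hne hf r) := by
  apply Finsupp.lhom_ext
  intro d a
  simp only [LinearMap.coe_comp, Function.comp_apply, FGrph.emap,
    Finsupp.lmapDomain_apply, Finsupp.mapDomain_single, phiE,
    Finsupp.linearCombination_single]
  by_cases hd : d.1 = e
  · rw [dif_pos hd, dif_pos hd, smul_zero, smul_zero, Finsupp.mapDomain_zero]
  · rw [dif_neg hd, dif_neg hd, Finsupp.mapDomain_smul, Finsupp.mapDomain_single]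

lemma range_le_phi (hbnd : G.bnd e = (x, y) ∨ G.bnd e = (y, x)) (r : P) :
    LinearMap.range (G.dr k r) ≤
      (LinearMap.range ((G.collapse e x y hne hf).dr k r)).comap
        (phiV k G e x y hne hf r) := by
  rintro _ ⟨w, rfl⟩
  exact ⟨phiE k G e x y hne hf r w,
    LinearMap.congr_fun (chain_phi k G e x y hne hf hbnd r) w⟩

include hfe in
lemma range_le_psi (hbnd : G.bnd e = (x, y) ∨ G.bnd e = (y, x)) (r : P) :
    LinearMap.range ((G.collapse e x y hne hf).dr k r) ≤
      (LinearMap.range (G.dr k r)).comap (psiV k G e x y hne hf r) := by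
  rintro _ ⟨w, rfl⟩
  exact ⟨psiE k G e x y hne hfe hf r w,
    LinearMap.congr_fun (chain_psi k G e x y hne hfe hf hbnd r) w⟩

noncomputable def eps0 (hbnd : G.bnd e = (x, y) ∨ G.bnd e = (y, x)) (r : P) :
    G.H0at k r ≃ₗ[k] (G.collapse e x y hne hf).H0at k r :=
  LinearEquiv.ofLinear
    (Submodule.mapQ _ _ (phiV k G e x y hne hf r)
      (range_le_phi k G e x y hne hf hbnd r))
    (Submodule.mapQ _ _ (psiV k G e x y hne hf r)
      (range_le_psi k G e x y hne hfe hf hbnd r))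
    (by
      apply Submodule.linearMap_qext
      apply LinearMap.ext
      intro z
      simp only [LinearMap.coe_comp, Function.comp_apply, Submodule.mkQ_apply,
        Submodule.mapQ_apply, LinearMap.id_comp]
      have h5 := LinearMap.congr_fun (phi_psi_V k G e x y hne hf r) z
      simp only [LinearMap.coe_comp, Function.comp_apply, LinearMap.id_coe, id_eq] at h5
      rw [h5])
    (by
      apply Submodule.linearMap_qext
      apply LinearMap.ext
      intro z
      simp only [LinearMap.coe_comp, Function.comp_apply, Submodule.mkQ_apply,
        Submodule.mapQ_apply, LinearMap.id_comp]
      rw [Submodule.Quotient.eq]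
      refine ⟨-(hmt k G e x y hfe r z), ?_⟩
      have h5 := LinearMap.congr_fun (homotopy_V k G e x y hne hfe hf hbnd r) z
      simp only [LinearMap.sub_apply, LinearMap.coe_comp, Function.comp_apply,
        LinearMap.id_apply] at h5
      rw [map_neg, ← h5]
      abel)

lemma H0map_mk (G : FGrph P) {r s : P} (h : r ≤ s) (w : {v : G.V // G.fV v ≤ r} →₀ k) :
    G.H0map k h (Submodule.Quotient.mk w) = Submodule.Quotient.mk (G.vmap k h w) :=
  rfl

include hfe in
lemma eps0_mk (hbnd : G.bnd e = (x, y) ∨ G.bnd e = (y, x)) (r : P)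
    (w : {v : G.V // G.fV v ≤ r} →₀ k) :
    eps0 k G e x y hne hfe hf hbnd r (Submodule.Quotient.mk w) =
      Submodule.Quotient.mk (phiV k G e x y hne hf r w) :=
  rfl

include hfe in
lemma eps0_nat (hbnd : G.bnd e = (x, y) ∨ G.bnd e = (y, x)) {r s : P} (h : r ≤ s)
    (z : G.H0at k r) :
    eps0 k G e x y hne hfe hf hbnd s (G.H0map k h z) =
      (G.collapse e x y hne hf).H0map k h (eps0 k G e x y hne hfe hf hbnd r z) := by
  obtain ⟨w, rfl⟩ := Submodule.Quotient.mk_surjective _ z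
  rw [H0map_mk, eps0_mk, eps0_mk, H0map_mk]
  exact congrArg _ (LinearMap.congr_fun (nat_phiV k G e x y hne hf h) w)

lemma ker_le_phi (hbnd : G.bnd e = (x, y) ∨ G.bnd e = (y, x)) (r : P) :
    ∀ z ∈ LinearMap.ker (G.dr k r),
      phiE k G e x y hne hf r z ∈ LinearMap.ker ((G.collapse e x y hne hf).dr k r) := by
  intro z hz
  rw [LinearMap.mem_ker] at hz ⊢
  rw [← LinearMap.comp_apply, chain_phi k G e x y hne hf hbnd r,
    LinearMap.comp_apply, hz, map_zero]

include hfe in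
lemma ker_le_psi (hbnd : G.bnd e = (x, y) ∨ G.bnd e = (y, x)) (r : P) :
    ∀ z ∈ LinearMap.ker ((G.collapse e x y hne hf).dr k r),
      psiE k G e x y hne hfe hf r z ∈ LinearMap.ker (G.dr k r) := by
  intro z hz
  rw [LinearMap.mem_ker] at hz ⊢
  rw [← LinearMap.comp_apply, chain_psi k G e x y hne hfe hf hbnd r,
    LinearMap.comp_apply, hz, map_zero]

noncomputable def eps1 (hbnd : G.bnd e = (x, y) ∨ G.bnd e = (y, x)) (r : P) :
    G.H1at k r ≃ₗ[k] (G.collapse e x y hne hf).H1at k r :=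
  LinearEquiv.ofLinear
    ((phiE k G e x y hne hf r).restrict (ker_le_phi k G e x y hne hf hbnd r))
    ((psiE k G e x y hne hfe hf r).restrict (ker_le_psi k G e x y hne hfe hf hbnd r))
    (by
      apply LinearMap.ext
      intro z
      apply Subtype.ext
      simp only [LinearMap.coe_comp, Function.comp_apply, LinearMap.restrict_apply,
        LinearMap.id_apply]
      exact LinearMap.congr_fun (phi_psi_E k G e x y hne hfe hf r) z.1)
    (by
      apply LinearMap.ext
      intro z
      apply Subtype.ext
      simp only [LinearMap.coe_comp, Function.comp_apply, LinearMap.restrict_apply,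
        LinearMap.id_apply]
      have h6 := LinearMap.congr_fun (homotopy_E k G e x y hne hfe hf hbnd r) z.1
      simp only [LinearMap.sub_apply, LinearMap.coe_comp, Function.comp_apply,
        LinearMap.id_apply] at h6
      have hz : G.dr k r z.1 = 0 := z.2
      rw [hz, map_zero] at h6
      exact (sub_eq_zero.mp h6).symm)

include hfe in
lemma eps1_nat (hbnd : G.bnd e = (x, y) ∨ G.bnd e = (y, x)) {r s : P} (h : r ≤ s)
    (z : G.H1at k r) :
    eps1 k G e x y hne hfe hf hbnd s (G.H1map k h z) =
      (G.collapse e x y hne hf).H1map k h (eps1 k G e x y hne hfe hf hbnd r z) := by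
  apply Subtype.ext
  show phiE k G e x y hne hf s (G.emap k h z.1) =
    (G.collapse e x y hne hf).emap k h (phiE k G e x y hne hf r z.1)
  exact LinearMap.congr_fun (nat_phiE k G e x y hne hf h) z.1

end CollapseAux

/-- if `e` is a collapsible edge (with `f(e) = f(x)` and removed endpoint
`x`, kept endpoint `y`), then `H_i(G,f) ≅ H_i(G↓e, f)` for `i ∈ {0,1}` as persistence
modules: there are families of linear equivalences at each grade, commuting with the
structure maps. -/
theorem homology_invariance_of_collapse (k : Type) [Field k] (G : FGrph P) (e : G.E)
    (x y : G.V) (hne : y ≠ x)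
    (hbnd : G.bnd e = (x, y) ∨ G.bnd e = (y, x)) (hfe : G.fE e = G.fV x)
    (hf : G.fV y ≤ G.fV x) :
    (∃ ε0 : ∀ r : P, G.H0at k r ≃ₗ[k] (G.collapse e x y hne hf).H0at k r,
      ∀ {r s : P} (h : r ≤ s) (z : G.H0at k r),
        ε0 s (G.H0map k h z) = (G.collapse e x y hne hf).H0map k h (ε0 r z)) ∧
    (∃ ε1 : ∀ r : P, G.H1at k r ≃ₗ[k] (G.collapse e x y hne hf).H1at k r,
      ∀ {r s : P} (h : r ≤ s) (z : G.H1at k r),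
        ε1 s (G.H1map k h z) = (G.collapse e x y hne hf).H1map k h (ε1 r z)) :=
  ⟨⟨eps0 k G e x y hne hfe hf hbnd, fun {r s} h z => eps0_nat k G e x y hne hfe hf hbnd h z⟩,
   ⟨eps1 k G e x y hne hfe hf hbnd, fun {r s} h z => eps1_nat k G e x y hne hfe hf hbnd h z⟩⟩
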